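/- For every tree T of order n ≥ 1, the mean subtree order satisfies μ(T) ≥ (n+2)/3, with equality if and only if T is a path. -/

import Mathlib

open SimpleGraph Set

/-- A subtree of a graph `G` is a nonempty, connected, acyclic subgraph of `G`. -/
def SimpleGraph.Subgraph.IsSubtree {V : Type*} {G : SimpleGraph V} (H : G.Subgraph) : Prop :=
  H.verts.Nonempty ∧ H.coe.Connected ∧ H.coe.IsAcyclic

/-- The mean subtree order of a graph: the average number of vertices of a subtree. -/
noncomputable def SimpleGraph.meanSubtreeOrder {V : Type*} (G : SimpleGraph V) : ℝ :=
  (∑ᶠ H ∈ {H : G.Subgraph | H.IsSubtree}, (H.verts.ncard : ℝ)) /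
    ({H : G.Subgraph | H.IsSubtree}.ncard : ℝ)

namespace Jamison

open Finset

set_option linter.unusedSectionVars false

attribute [local instance] Classical.propDecidable

variable {V : Type*} [DecidableEq V] {G : SimpleGraph V}

/-- Connectivity of a finite vertex set: nonempty and any two vertices are joined
by a walk staying inside the set. -/
def conn (G : SimpleGraph V) (S : Finset V) : Prop :=
  S.Nonempty ∧ ∀ x ∈ S, ∀ y ∈ S, ∃ p : G.Walk x y, ∀ z ∈ p.support, z ∈ S

lemma conn_singleton (G : SimpleGraph V) (r : V) : conn G {r} := by
  refine ⟨⟨r, mem_singleton_self r⟩, ?_⟩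
  intro x hx y hy
  rw [Finset.mem_singleton] at hx hy
  subst hx; subst hy
  exact ⟨Walk.nil, by simp⟩

lemma mem_support_append {x y z u : V} {p : G.Walk x y} {q : G.Walk y z}
    (h : u ∈ (p.append q).support) : u ∈ p.support ∨ u ∈ q.support := by
  rw [Walk.support_append] at h
  rcases List.mem_append.mp h with h | h
  · exact Or.inl h
  · exact Or.inr (List.mem_of_mem_tail h)

lemma conn_of_hub {S : Finset V} {x₀ : V} (hx₀ : x₀ ∈ S)
    (h : ∀ y ∈ S, ∃ p : G.Walk x₀ y, ∀ z ∈ p.support, z ∈ S) : conn G S := by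
  refine ⟨⟨x₀, hx₀⟩, ?_⟩
  intro x hx y hy
  obtain ⟨px, hpx⟩ := h x hx
  obtain ⟨py, hpy⟩ := h y hy
  refine ⟨px.reverse.append py, ?_⟩
  intro z hz
  rcases mem_support_append hz with h' | h'
  · exact hpx z (by rwa [Walk.support_reverse, List.mem_reverse] at h')
  · exact hpy z h'

lemma exists_adj_of_conn {S : Finset V} {r : V} (hS : conn G S) (hr : r ∈ S)
    (h2 : 2 ≤ S.card) : ∃ w ∈ S, G.Adj r w := by
  obtain ⟨y, hy, hne⟩ := Finset.exists_mem_ne (s := S) (by omega) r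
  obtain ⟨p, hp⟩ := hS.2 r hr y hy
  cases p with
  | nil => exact absurd rfl hne
  | @cons _ c _ h q =>
      exact ⟨c, hp c (by simp [Walk.support_cons, q.start_mem_support]), h⟩

/-- In a walk from a `P`-vertex to a non-`P`-vertex there is a crossing edge. -/
lemma exists_cross {P : V → Prop} : ∀ {x y : V} (p : G.Walk x y), P x → ¬ P y →
    ∃ a b, G.Adj a b ∧ a ∈ p.support ∧ b ∈ p.support ∧ P a ∧ ¬ P b := by
  intro x y p
  induction p with
  | nil => intro h h2; exact absurd h h2
  | @cons u c y h q ih =>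
      intro hx hy
      by_cases hb : P c
      · obtain ⟨a, b, hab, ha, hb', hPa, hPb⟩ := ih hb hy
        exact ⟨a, b, hab, by simp [Walk.support_cons, ha],
          by simp [Walk.support_cons, hb'], hPa, hPb⟩
      · exact ⟨u, c, h, by simp [Walk.support_cons],
          by simp [Walk.support_cons, q.start_mem_support], hx, hb⟩

/-- If the only edges between `A` and `B` go from `r` to `w`, and a walk with support in
`A ∪ B` starts and ends in `A`, then there is a walk with the same endpoints inside `A`. -/
lemma walk_in_side {A B : Finset V} {r w : V}
    (hdisj : ∀ x ∈ A, x ∉ B)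
    (hcross : ∀ a b, G.Adj a b → a ∈ A → b ∈ B → a = r ∧ b = w) :
    ∀ (n : ℕ) {x y : V} (p : G.Walk x y), p.length ≤ n →
      (∀ z ∈ p.support, z ∈ A ∪ B) → x ∈ A → y ∈ A →
      ∃ q : G.Walk x y, ∀ z ∈ q.support, z ∈ A := by
  intro n
  induction n with
  | zero =>
      intro x y p hlen hsupp hx hy
      cases p with
      | nil => exact ⟨Walk.nil, by simp [hx]⟩
      | cons h q => simp [Walk.length_cons] at hlen
  | succ n ih =>
      intro x y p hlen hsupp hx hy
      cases p with
      | nil => exact ⟨Walk.nil, by simp [hx]⟩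
      | @cons _ c _ h t =>
          have hsupt : ∀ z ∈ t.support, z ∈ A ∪ B := fun z hz =>
            hsupp z (by simp [Walk.support_cons, hz])
          have hlent : t.length ≤ n := by
            simp only [Walk.length_cons] at hlen; omega
          by_cases hc : c ∈ A
          · obtain ⟨q, hq⟩ := ih t hlent hsupt hc hy
            refine ⟨Walk.cons h q, ?_⟩
            intro z hz
            rcases by simpa [Walk.support_cons] using hz with rfl | hz'
            · exact hx
            · exact hq z hz'
          · have hcB : c ∈ B := by
              have := hsupt c t.start_mem_support
              rcases Finset.mem_union.mp this with h' | h'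
              · exact absurd h' hc
              · exact h'
            obtain ⟨hxr, hcw⟩ := hcross x c h hx hcB
            have hyB : y ∉ B := hdisj y hy
            obtain ⟨a, b, hab, hat, hbt, haB, hbB⟩ :=
              exists_cross (P := fun z => z ∈ B) t hcB hyB
            have hbA : b ∈ A := by
              rcases Finset.mem_union.mp (hsupt b hbt) with h' | h'
              · exact h'
              · exact absurd h' hbB
            obtain ⟨hbr, haw⟩ := hcross b a hab.symm hbA haB
            have hxt : x ∈ t.support := by rw [hxr, ← hbr]; exact hbt
            have hlen' : (t.dropUntil x hxt).length ≤ n :=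
              le_trans (Walk.length_dropUntil_le t hxt) hlent
            exact ih (t.dropUntil x hxt) hlen'
              (fun z hz => hsupt z (Walk.support_dropUntil_subset t hxt hz)) hx hy

lemma conn_union_edge {P Q : Finset V} {r w : V} (hP : conn G P) (hQ : conn G Q)
    (hr : r ∈ P) (hw : w ∈ Q) (hadj : G.Adj r w) : conn G (P ∪ Q) := by
  refine ⟨⟨r, Finset.mem_union_left _ hr⟩, ?_⟩
  have key : ∀ y ∈ P ∪ Q, ∃ p : G.Walk r y, ∀ z ∈ p.support, z ∈ P ∪ Q := by
    intro y hy
    rcases Finset.mem_union.mp hy with hy' | hy'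
    · obtain ⟨p, hp⟩ := hP.2 r hr y hy'
      exact ⟨p, fun z hz => Finset.mem_union_left _ (hp z hz)⟩
    · obtain ⟨p, hp⟩ := hQ.2 w hw y hy'
      refine ⟨Walk.cons hadj p, ?_⟩
      intro z hz
      rcases by simpa [Walk.support_cons] using hz with rfl | hz'
      · exact Finset.mem_union_left _ hr
      · exact Finset.mem_union_right _ (hp z hz')
  exact (conn_of_hub (Finset.mem_union_left _ hr) key).2

section Split

variable (G) in
/-- The `w`-side of the split of `S` along the edge `(r, w)`. -/
noncomputable def sideW (S : Finset V) (r w : V) : Finset V :=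
  S.filter (fun x => ∃ p : G.Walk w x, (∀ z ∈ p.support, z ∈ S) ∧ r ∉ p.support)

variable (G) in
/-- The `r`-side of the split of `S` along the edge `(r, w)`. -/
noncomputable def sideR (S : Finset V) (r w : V) : Finset V := S \ sideW G S r w

variable {S : Finset V} {r w : V}

lemma sideW_subset : sideW G S r w ⊆ S := filter_subset _ _

lemma sideR_subset : sideR G S r w ⊆ S := sdiff_subset

lemma mem_sideW_of_walk {x : V} (hx : x ∈ S) (p : G.Walk w x)
    (hp : ∀ z ∈ p.support, z ∈ S) (hr : r ∉ p.support) : x ∈ sideW G S r w :=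
  mem_filter.mpr ⟨hx, p, hp, hr⟩

lemma w_mem_sideW (hw : w ∈ S) (hne : r ≠ w) : w ∈ sideW G S r w := by
  refine mem_sideW_of_walk hw Walk.nil ?_ ?_ <;> simp [hne, hw]

lemma r_not_mem_sideW : r ∉ sideW G S r w := by
  intro h
  obtain ⟨-, p, -, hr⟩ := mem_filter.mp h
  exact hr p.end_mem_support

lemma r_mem_sideR (hr : r ∈ S) : r ∈ sideR G S r w :=
  mem_sdiff.mpr ⟨hr, r_not_mem_sideW⟩

lemma sideR_union_sideW : sideR G S r w ∪ sideW G S r w = S :=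
  Finset.sdiff_union_of_subset sideW_subset

lemma sideR_disj : ∀ x ∈ sideR G S r w, x ∉ sideW G S r w :=
  fun _ hx => (mem_sdiff.mp hx).2

lemma support_mem_sideW {x z : V} (hx : x ∈ sideW G S r w) :
    ∀ (p : G.Walk w x), (∀ u ∈ p.support, u ∈ S) → r ∉ p.support →
      z ∈ p.support → z ∈ sideW G S r w := by
  intro p hp hr hz
  refine mem_sideW_of_walk (hp z hz) (p.takeUntil z hz) ?_ ?_
  · exact fun u hu => hp u (Walk.support_takeUntil_subset p hz hu)
  · exact fun hc => hr (Walk.support_takeUntil_subset p hz hc)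

lemma conn_sideW (hw : w ∈ S) (hne : r ≠ w) : conn G (sideW G S r w) := by
  refine conn_of_hub (w_mem_sideW hw hne) ?_
  intro y hy
  obtain ⟨-, p, hp, hr⟩ := mem_filter.mp hy
  exact ⟨p, fun z hz => support_mem_sideW hy p hp hr hz⟩

lemma cross_edge (hacyc : G.IsAcyclic) (hadj : G.Adj r w) :
    ∀ a b, G.Adj a b → a ∈ sideR G S r w → b ∈ sideW G S r w → a = r ∧ b = w := by
  intro a b hab ha hb
  obtain ⟨hbS, p, hp, hrp⟩ := mem_filter.mp hb
  have haS : a ∈ S := sideR_subset ha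
  have har : a = r := by
    by_contra hne
    have : a ∈ sideW G S r w := by
      refine mem_sideW_of_walk haS (p.append (Walk.cons hab.symm Walk.nil)) ?_ ?_
      · intro z hz
        rcases mem_support_append hz with h' | h'
        · exact hp z h'
        · rcases by simpa [Walk.support_cons] using h' with rfl | rfl
          · exact hbS
          · exact haS
      · intro hc
        rcases mem_support_append hc with h' | h'
        · exact hrp h'
        · rcases by simpa [Walk.support_cons] using h' with rfl | rfl
          · exact r_not_mem_sideW hb
          · exact hne rfl
    exact (mem_sdiff.mp ha).2 this
  subst har
  refine ⟨rfl, ?_⟩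
  by_contra hbw
  have hbw' : w ≠ b := fun h => hbw h.symm
  set π := p.toPath with hπ
  have hrπ : a ∉ π.val.support := fun hc => hrp (Walk.support_toPath_subset p hc)
  have hp1 : (Walk.cons hadj π.val).IsPath := π.prop.cons hrπ
  have hw1 : w ∈ (Walk.cons hadj π.val).support := by
    simp [Walk.support_cons, π.val.start_mem_support]
  have := hacyc.path_unique ⟨Walk.cons hadj π.val, hp1⟩ (Path.singleton hab)
  have hw2 : w ∈ (Path.singleton hab).val.support := by
    rw [← this]; exact hw1
  simp only [Path.singleton, Walk.support_cons, Walk.support_nil] at hw2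
  rcases by simpa using hw2 with h' | h'
  · exact hadj.ne h'.symm
  · exact hbw' h'

lemma conn_sideR (hacyc : G.IsAcyclic) (hS : conn G S) (hr : r ∈ S) (hw : w ∈ S)
    (hadj : G.Adj r w) : conn G (sideR G S r w) := by
  refine conn_of_hub (r_mem_sideR hr) ?_
  intro y hy
  obtain ⟨p, hp⟩ := hS.2 r hr y (sideR_subset hy)
  refine walk_in_side (r := r) (w := w) sideR_disj (cross_edge hacyc hadj) p.length p le_rfl
    ?_ (r_mem_sideR hr) hy
  intro z hz
  have hzS := hp z hz
  rw [← sideR_union_sideW (G := G) (S := S) (r := r) (w := w)] at hzS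
  exact hzS

/-- A connected subset of `S` containing `r` and meeting the `w`-side contains `w`. -/
lemma w_mem_of_meets (hacyc : G.IsAcyclic) (hadj : G.Adj r w) {T : Finset V}
    (hTS : T ⊆ S) (hT : conn G T) (hrT : r ∈ T)
    (hmeet : ∃ y ∈ T, y ∈ sideW G S r w) : w ∈ T := by
  obtain ⟨y, hyT, hyW⟩ := hmeet
  obtain ⟨p, hp⟩ := hT.2 y hyT r hrT
  obtain ⟨a, b, hab, hat, hbt, haW, hbW⟩ :=
    exists_cross (P := fun z => z ∈ sideW G S r w) p hyW r_not_mem_sideW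
  have hbR : b ∈ sideR G S r w := mem_sdiff.mpr ⟨hTS (hp b hbt), hbW⟩
  obtain ⟨-, haw⟩ := cross_edge hacyc hadj b a hab.symm hbR haW
  exact haw ▸ hp a hat

lemma conn_inter_sideR (hacyc : G.IsAcyclic) (hadj : G.Adj r w) {T : Finset V}
    (hTS : T ⊆ S) (hT : conn G T) (hrT : r ∈ T) : conn G (T ∩ sideR G S r w) := by
  have hrT' : r ∈ T ∩ sideR G S r w := mem_inter.mpr ⟨hrT, r_mem_sideR (hTS hrT)⟩
  refine conn_of_hub hrT' ?_
  intro y hy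
  obtain ⟨p, hp⟩ := hT.2 r hrT y (mem_inter.mp hy).1
  refine walk_in_side (r := r) (w := w) (A := T ∩ sideR G S r w)
    (B := T ∩ sideW G S r w) ?_ ?_ p.length p le_rfl ?_ hrT' hy
  · intro x hx hc
    exact sideR_disj _ (mem_inter.mp hx).2 (mem_inter.mp hc).2
  · intro a b hab ha hb
    exact cross_edge hacyc hadj a b hab (mem_inter.mp ha).2 (mem_inter.mp hb).2
  · intro z hz
    have hzT : z ∈ T := hp z hz
    have hzS : z ∈ S := hTS hzT
    rw [← sideR_union_sideW (G := G) (S := S) (r := r) (w := w)] at hzS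
    rcases Finset.mem_union.mp hzS with h' | h'
    · exact Finset.mem_union_left _ (mem_inter.mpr ⟨hzT, h'⟩)
    · exact Finset.mem_union_right _ (mem_inter.mpr ⟨hzT, h'⟩)

lemma conn_inter_sideW (hacyc : G.IsAcyclic) (hadj : G.Adj r w) {T : Finset V}
    (hTS : T ⊆ S) (hT : conn G T) (hrT : r ∈ T) (hwT : w ∈ T) :
    conn G (T ∩ sideW G S r w) := by
  have hwT' : w ∈ T ∩ sideW G S r w :=
    mem_inter.mpr ⟨hwT, w_mem_sideW (hTS hwT) hadj.ne⟩
  refine conn_of_hub hwT' ?_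
  intro y hy
  obtain ⟨p, hp⟩ := hT.2 w hwT y (mem_inter.mp hy).1
  refine walk_in_side (r := w) (w := r) (A := T ∩ sideW G S r w)
    (B := T ∩ sideR G S r w) ?_ ?_ p.length p le_rfl ?_ hwT' hy
  · intro x hx hc
    exact sideR_disj _ (mem_inter.mp hc).2 (mem_inter.mp hx).2
  · intro a b hab ha hb
    obtain ⟨h1, h2⟩ := cross_edge hacyc hadj b a hab.symm
      (mem_inter.mp hb).2 (mem_inter.mp ha).2
    exact ⟨h2, h1⟩
  · intro z hz
    have hzT : z ∈ T := hp z hz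
    have hzS : z ∈ S := hTS hzT
    rw [← sideR_union_sideW (G := G) (S := S) (r := r) (w := w)] at hzS
    rcases Finset.mem_union.mp hzS with h' | h'
    · exact Finset.mem_union_right _ (mem_inter.mpr ⟨hzT, h'⟩)
    · exact Finset.mem_union_left _ (mem_inter.mpr ⟨hzT, h'⟩)

end Split

section Count

variable (G) in
/-- The connected subsets of `S` (the "subtrees"). -/
noncomputable def cS (S : Finset V) : Finset (Finset V) := S.powerset.filter (conn G)

variable (G) in
/-- The connected subsets of `S` containing `r`. -/
noncomputable def cR (S : Finset V) (r : V) : Finset (Finset V) :=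
  (cS G S).filter (fun T => r ∈ T)

variable (G) in
noncomputable def NN (S : Finset V) : ℕ := (cS G S).card

variable (G) in
noncomputable def SS (S : Finset V) : ℕ := ∑ T ∈ cS G S, T.card

variable (G) in
noncomputable def NR (S : Finset V) (r : V) : ℕ := (cR G S r).card

variable (G) in
noncomputable def SR (S : Finset V) (r : V) : ℕ := ∑ T ∈ cR G S r, T.card

variable {S T : Finset V} {r w : V}

lemma mem_cS : T ∈ cS G S ↔ T ⊆ S ∧ conn G T := by
  simp [cS, Finset.mem_powerset]

lemma mem_cR : T ∈ cR G S r ↔ (T ⊆ S ∧ conn G T) ∧ r ∈ T := by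
  simp [cR, mem_cS]

lemma self_mem_cS (hS : conn G S) : S ∈ cS G S := mem_cS.mpr ⟨Finset.Subset.refl _, hS⟩

lemma cS_singleton (r : V) : cS G {r} = {{r}} := by
  ext T
  simp only [mem_cS, Finset.mem_singleton, Finset.subset_singleton_iff]
  constructor
  · rintro ⟨h1 | h1, h2⟩
    · subst h1; exact absurd h2.1 (by simp)
    · exact h1
  · rintro rfl
    exact ⟨Or.inr rfl, conn_singleton G r⟩

lemma cR_singleton (r : V) : cR G {r} r = {{r}} := by
  ext T
  simp only [cR, Finset.mem_filter, cS_singleton, Finset.mem_singleton]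
  constructor
  · rintro ⟨rfl, -⟩; rfl
  · rintro rfl; simp

lemma one_le_NR (hS : conn G S) (hr : r ∈ S) : 1 ≤ NR G S r :=
  Finset.card_pos.mpr ⟨S, mem_cR.mpr ⟨⟨Finset.Subset.refl _, hS⟩, hr⟩⟩

lemma NR_le_NN : NR G S r ≤ NN G S := Finset.card_le_card (Finset.filter_subset _ _)

lemma NR_le_SR : NR G S r ≤ SR G S r := by
  rw [NR, SR, Finset.card_eq_sum_ones]
  refine Finset.sum_le_sum ?_
  intro T hT
  have := (mem_cR.mp hT).1.2.1
  exact Finset.card_pos.mpr this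

lemma one_le_NN (hS : conn G S) : 1 ≤ NN G S :=
  le_trans (one_le_NR hS hS.1.choose_spec) NR_le_NN

lemma card_le_of_mem_cS (h : T ∈ cS G S) : T.card ≤ S.card :=
  Finset.card_le_card (mem_cS.mp h).1

section SplitCount

variable (hacyc : G.IsAcyclic) (hS : conn G S) (hr : r ∈ S) (hw : w ∈ S) (hadj : G.Adj r w)

include hacyc hS hr hw hadj

lemma disj_sides : ∀ x ∈ sideW G S r w, x ∉ sideR G S r w :=
  fun x hx hc => sideR_disj x hc hx

/-- Connected subsets containing `r` but not `w` are exactly those of the `r`-side. -/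
lemma cR_not_w : (cR G S r).filter (fun T => w ∉ T) = cR G (sideR G S r w) r := by
  ext T
  simp only [Finset.mem_filter, mem_cR]
  constructor
  · rintro ⟨⟨⟨hTS, hconn⟩, hrT⟩, hwT⟩
    refine ⟨⟨?_, hconn⟩, hrT⟩
    intro x hx
    by_contra hxR
    have hxW : x ∈ sideW G S r w := by
      have := hTS hx
      rw [← sideR_union_sideW (G := G) (S := S) (r := r) (w := w)] at this
      rcases Finset.mem_union.mp this with h' | h'
      · exact absurd h' hxR
      · exact h'
    exact hwT (w_mem_of_meets hacyc hadj hTS hconn hrT ⟨x, hx, hxW⟩)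
  · rintro ⟨⟨hTA, hconn⟩, hrT⟩
    refine ⟨⟨⟨subset_trans hTA sideR_subset, hconn⟩, hrT⟩, ?_⟩
    intro hwT
    exact sideR_disj w (hTA hwT) (w_mem_sideW hw hadj.ne)

/-- Connected subsets avoiding `r` split into those inside the two sides. -/
lemma cS_not_r : (cS G S).filter (fun T => r ∉ T) =
    (cS G (sideR G S r w)).filter (fun T => r ∉ T) ∪ cS G (sideW G S r w) := by
  ext T
  simp only [Finset.mem_filter, Finset.mem_union, mem_cS]
  constructor
  · rintro ⟨⟨hTS, hconn⟩, hrT⟩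
    by_cases hmeet : ∃ x ∈ T, x ∈ sideW G S r w
    · right
      refine ⟨?_, hconn⟩
      intro x hx
      by_contra hxW
      have hxR : x ∈ sideR G S r w := by
        have := hTS hx
        rw [← sideR_union_sideW (G := G) (S := S) (r := r) (w := w)] at this
        rcases Finset.mem_union.mp this with h' | h'
        · exact h'
        · exact absurd h' hxW
      obtain ⟨y, hyT, hyW⟩ := hmeet
      obtain ⟨p, hp⟩ := hconn.2 y hyT x hx
      obtain ⟨a, b, hab, hat, hbt, haW, hbW⟩ :=
        exists_cross (P := fun z => z ∈ sideW G S r w) p hyW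
          (fun hc => sideR_disj x hxR hc)
      have hbR : b ∈ sideR G S r w := by
        have := hTS (hp b hbt)
        rw [← sideR_union_sideW (G := G) (S := S) (r := r) (w := w)] at this
        rcases Finset.mem_union.mp this with h' | h'
        · exact h'
        · exact absurd h' hbW
      obtain ⟨hbr, -⟩ := cross_edge hacyc hadj b a hab.symm hbR haW
      exact hrT (hbr ▸ hp b hbt)
    · left
      refine ⟨⟨?_, hconn⟩, hrT⟩
      intro x hx
      have := hTS hx
      rw [← sideR_union_sideW (G := G) (S := S) (r := r) (w := w)] at this
      rcases Finset.mem_union.mp this with h' | h'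
      · exact h'
      · exact absurd h' (fun hc => hmeet ⟨x, hx, hc⟩)
  · rintro (⟨⟨hTA, hconn⟩, hrT⟩ | ⟨hTB, hconn⟩)
    · exact ⟨⟨subset_trans hTA sideR_subset, hconn⟩, hrT⟩
    · refine ⟨⟨subset_trans hTB sideW_subset, hconn⟩, ?_⟩
      intro hrT
      exact r_not_mem_sideW (hTB hrT)

lemma inter_sides_eq (hTS : T ⊆ S) :
    T ∩ sideR G S r w ∪ T ∩ sideW G S r w = T := by
  rw [← Finset.inter_union_distrib_left, sideR_union_sideW]
  exact Finset.inter_eq_left.mpr hTS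

/-- The crossing subtrees biject with pairs. -/
lemma cross_sum (f : ℕ → ℕ) :
    ∑ T ∈ (cR G S r).filter (fun T => w ∈ T), f T.card =
      ∑ P ∈ cR G (sideR G S r w) r ×ˢ cR G (sideW G S r w) w,
        f (P.1.card + P.2.card) := by
  refine Finset.sum_bij' (fun T _ => (T ∩ sideR G S r w, T ∩ sideW G S r w))
    (fun P _ => P.1 ∪ P.2) ?_ ?_ ?_ ?_ ?_
  · intro T hT
    obtain ⟨⟨⟨hTS, hconn⟩, hrT⟩, hwT⟩ := by
      simpa only [Finset.mem_filter, mem_cR] using hT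
    rw [Finset.mem_product]
    constructor
    · exact mem_cR.mpr ⟨⟨Finset.inter_subset_right, conn_inter_sideR hacyc hadj hTS hconn hrT⟩,
        Finset.mem_inter.mpr ⟨hrT, r_mem_sideR (hTS hrT)⟩⟩
    · exact mem_cR.mpr ⟨⟨Finset.inter_subset_right,
        conn_inter_sideW hacyc hadj hTS hconn hrT hwT⟩,
        Finset.mem_inter.mpr ⟨hwT, w_mem_sideW (hTS hwT) hadj.ne⟩⟩
  · intro P hP
    rw [Finset.mem_product] at hP
    obtain ⟨⟨h1S, h1c⟩, h1r⟩ := mem_cR.mp hP.1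
    obtain ⟨⟨h2S, h2c⟩, h2w⟩ := mem_cR.mp hP.2
    simp only [Finset.mem_filter, mem_cR]
    refine ⟨⟨⟨?_, conn_union_edge h1c h2c h1r h2w hadj⟩, Finset.mem_union_left _ h1r⟩,
      Finset.mem_union_right _ h2w⟩
    exact Finset.union_subset (subset_trans h1S sideR_subset) (subset_trans h2S sideW_subset)
  · intro T hT
    obtain ⟨⟨⟨hTS, hconn⟩, hrT⟩, hwT⟩ := by
      simpa only [Finset.mem_filter, mem_cR] using hT
    exact inter_sides_eq hacyc hS hr hw hadj hTS
  · intro P hP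
    rw [Finset.mem_product] at hP
    obtain ⟨⟨h1S, h1c⟩, h1r⟩ := mem_cR.mp hP.1
    obtain ⟨⟨h2S, h2c⟩, h2w⟩ := mem_cR.mp hP.2
    have e1 : (P.1 ∪ P.2) ∩ sideR G S r w = P.1 := by
      rw [Finset.union_inter_distrib_right]
      rw [Finset.inter_eq_left.mpr h1S]
      have : P.2 ∩ sideR G S r w = ∅ := by
        rw [Finset.eq_empty_iff_forall_notMem]
        intro x hx
        exact sideR_disj x (Finset.mem_inter.mp hx).2 (h2S (Finset.mem_inter.mp hx).1)
      rw [this, Finset.union_empty]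
    have e2' := e1
    have e2 : (P.1 ∪ P.2) ∩ sideW G S r w = P.2 := by
      rw [Finset.union_inter_distrib_right]
      rw [Finset.inter_eq_left.mpr h2S]
      have : P.1 ∩ sideW G S r w = ∅ := by
        rw [Finset.eq_empty_iff_forall_notMem]
        intro x hx
        exact sideR_disj x (h1S (Finset.mem_inter.mp hx).1) (Finset.mem_inter.mp hx).2
      rw [this, Finset.empty_union]
    show ((P.1 ∪ P.2) ∩ sideR G S r w, (P.1 ∪ P.2) ∩ sideW G S r w) = P
    rw [e1, e2]
  · intro T hT
    obtain ⟨⟨⟨hTS, hconn⟩, hrT⟩, hwT⟩ := by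
      simpa only [Finset.mem_filter, mem_cR] using hT
    congr 1
    rw [← Finset.card_union_of_disjoint, inter_sides_eq hacyc hS hr hw hadj hTS]
    rw [Finset.disjoint_left]
    intro x hx hc
    exact sideR_disj x (Finset.mem_inter.mp hx).2 (Finset.mem_inter.mp hc).2

lemma NR_split :
    NR G S r = NR G (sideR G S r w) r * (1 + NR G (sideW G S r w) w) := by
  have h1 : NR G S r = ((cR G S r).filter (fun T => w ∈ T)).card +
      ((cR G S r).filter (fun T => w ∉ T)).card :=
    (Finset.card_filter_add_card_filter_not _).symm
  have h2 : ((cR G S r).filter (fun T => w ∈ T)).card =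
      NR G (sideR G S r w) r * NR G (sideW G S r w) w := by
    have h := cross_sum hacyc hS hr hw hadj (fun _ => 1)
    simp only [Finset.sum_const, smul_eq_mul, mul_one, Finset.card_product] at h
    exact h
  rw [h1, h2, cR_not_w hacyc hS hr hw hadj]
  show NR G (sideR G S r w) r * NR G (sideW G S r w) w + NR G (sideR G S r w) r = _
  ring

lemma SR_split :
    SR G S r = SR G (sideR G S r w) r * (1 + NR G (sideW G S r w) w) +
      NR G (sideR G S r w) r * SR G (sideW G S r w) w := by
  have h1 : SR G S r = (∑ T ∈ (cR G S r).filter (fun T => w ∈ T), T.card) +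
      ∑ T ∈ (cR G S r).filter (fun T => w ∉ T), T.card :=
    (Finset.sum_filter_add_sum_filter_not _ _ _).symm
  have h2 := cross_sum hacyc hS hr hw hadj id
  simp only [id] at h2
  have h3 : ∑ P ∈ cR G (sideR G S r w) r ×ˢ cR G (sideW G S r w) w,
      (P.1.card + P.2.card) = SR G (sideR G S r w) r * NR G (sideW G S r w) w +
      NR G (sideR G S r w) r * SR G (sideW G S r w) w := by
    rw [Finset.sum_product]
    simp only [Finset.sum_add_distrib, Finset.sum_const, smul_eq_mul]
    rw [← Finset.mul_sum]
    simp only [SR, NR]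
    ring
  rw [h1, cR_not_w hacyc hS hr hw hadj, h2, h3]
  show SR G (sideR G S r w) r * NR G (sideW G S r w) w +
      NR G (sideR G S r w) r * SR G (sideW G S r w) w + SR G (sideR G S r w) r = _
  ring

lemma NN_split :
    NN G S = NN G (sideR G S r w) + NN G (sideW G S r w) +
      NR G (sideR G S r w) r * NR G (sideW G S r w) w := by
  have e1 : NN G S = NR G S r + ((cS G S).filter (fun T => r ∉ T)).card := by
    rw [NN, NR, cR]
    exact (Finset.card_filter_add_card_filter_not _).symm
  have disj : Disjoint ((cS G (sideR G S r w)).filter (fun T => r ∉ T))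
      (cS G (sideW G S r w)) := by
    rw [Finset.disjoint_left]
    intro T hT hc
    obtain ⟨hTA, -⟩ := Finset.mem_filter.mp hT
    obtain ⟨hTA', hTc⟩ := mem_cS.mp hTA
    obtain ⟨hTB, -⟩ := mem_cS.mp hc
    obtain ⟨x, hx⟩ := hTc.1
    exact sideR_disj x (hTA' hx) (hTB hx)
  have e2 : ((cS G S).filter (fun T => r ∉ T)).card =
      ((cS G (sideR G S r w)).filter (fun T => r ∉ T)).card + NN G (sideW G S r w) := by
    rw [cS_not_r hacyc hS hr hw hadj, Finset.card_union_of_disjoint disj]; rfl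
  have e3 : NN G (sideR G S r w) = NR G (sideR G S r w) r +
      ((cS G (sideR G S r w)).filter (fun T => r ∉ T)).card := by
    rw [NN, NR, cR]
    exact (Finset.card_filter_add_card_filter_not _).symm
  have e4 := NR_split hacyc hS hr hw hadj
  have e5 : NR G (sideR G S r w) r * (1 + NR G (sideW G S r w) w) =
      NR G (sideR G S r w) r + NR G (sideR G S r w) r * NR G (sideW G S r w) w := by ring
  omega

lemma SS_split :
    SS G S = SS G (sideR G S r w) + SS G (sideW G S r w) +
      (SR G (sideR G S r w) r * NR G (sideW G S r w) w +
        NR G (sideR G S r w) r * SR G (sideW G S r w) w) := by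
  have e1 : SS G S = SR G S r + ∑ T ∈ (cS G S).filter (fun T => r ∉ T), T.card := by
    rw [SS, SR, cR]
    exact (Finset.sum_filter_add_sum_filter_not _ _ _).symm
  have disj : Disjoint ((cS G (sideR G S r w)).filter (fun T => r ∉ T))
      (cS G (sideW G S r w)) := by
    rw [Finset.disjoint_left]
    intro T hT hc
    obtain ⟨hTA, -⟩ := Finset.mem_filter.mp hT
    obtain ⟨hTA', hTc⟩ := mem_cS.mp hTA
    obtain ⟨hTB, -⟩ := mem_cS.mp hc
    obtain ⟨x, hx⟩ := hTc.1
    exact sideR_disj x (hTA' hx) (hTB hx)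
  have e2 : ∑ T ∈ (cS G S).filter (fun T => r ∉ T), T.card =
      (∑ T ∈ (cS G (sideR G S r w)).filter (fun T => r ∉ T), T.card) +
        SS G (sideW G S r w) := by
    rw [cS_not_r hacyc hS hr hw hadj, Finset.sum_union disj]; rfl
  have e3 : SS G (sideR G S r w) = SR G (sideR G S r w) r +
      ∑ T ∈ (cS G (sideR G S r w)).filter (fun T => r ∉ T), T.card := by
    rw [SS, SR, cR]
    exact (Finset.sum_filter_add_sum_filter_not _ _ _).symm
  have e4 := SR_split hacyc hS hr hw hadj
  have e5 : SR G (sideR G S r w) r * (1 + NR G (sideW G S r w) w) +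
      NR G (sideR G S r w) r * SR G (sideW G S r w) w =
      SR G (sideR G S r w) r + (SR G (sideR G S r w) r * NR G (sideW G S r w) w +
        NR G (sideR G S r w) r * SR G (sideW G S r w) w) := by ring
  omega

end SplitCount

end Count

section Deg

variable (G) in
/-- Degree of `x` inside the vertex set `S`. -/
noncomputable def ndeg (S : Finset V) (x : V) : ℕ := (S.filter (fun y => G.Adj x y)).card

variable {S : Finset V} {r w : V}

lemma exists_adj_of_ndeg {x : V} (h : 1 ≤ ndeg G S x) : ∃ y ∈ S, G.Adj x y := by
  obtain ⟨y, hy⟩ := Finset.card_pos.mp h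
  obtain ⟨hyS, hadj⟩ := Finset.mem_filter.mp hy
  exact ⟨y, hyS, hadj⟩

lemma ndeg_mono {S₁ S₂ : Finset V} (h : S₁ ⊆ S₂) (x : V) : ndeg G S₁ x ≤ ndeg G S₂ x :=
  Finset.card_le_card (Finset.filter_subset_filter _ h)

lemma one_le_ndeg_of_adj {x y : V} (hy : y ∈ S) (h : G.Adj x y) : 1 ≤ ndeg G S x :=
  Finset.card_pos.mpr ⟨y, Finset.mem_filter.mpr ⟨hy, h⟩⟩

section DegSplit

variable (hacyc : G.IsAcyclic) (hS : conn G S) (hr : r ∈ S) (hw : w ∈ S) (hadj : G.Adj r w)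

include hacyc hS hr hw hadj

lemma ndeg_sideR_eq {x : V} (hx : x ∈ sideR G S r w) (hxr : x ≠ r) :
    ndeg G (sideR G S r w) x = ndeg G S x := by
  unfold ndeg
  congr 1
  ext y
  simp only [Finset.mem_filter]
  constructor
  · rintro ⟨hyA, hadj'⟩
    exact ⟨sideR_subset hyA, hadj'⟩
  · rintro ⟨hyS, hadj'⟩
    refine ⟨?_, hadj'⟩
    rw [← sideR_union_sideW (G := G) (S := S) (r := r) (w := w)] at hyS
    rcases Finset.mem_union.mp hyS with h' | h'
    · exact h'
    · exact absurd (cross_edge hacyc hadj x y hadj' hx h').1 hxr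

lemma ndeg_sideW_eq {x : V} (hx : x ∈ sideW G S r w) (hxw : x ≠ w) :
    ndeg G (sideW G S r w) x = ndeg G S x := by
  unfold ndeg
  congr 1
  ext y
  simp only [Finset.mem_filter]
  constructor
  · rintro ⟨hyB, hadj'⟩
    exact ⟨sideW_subset hyB, hadj'⟩
  · rintro ⟨hyS, hadj'⟩
    refine ⟨?_, hadj'⟩
    rw [← sideR_union_sideW (G := G) (S := S) (r := r) (w := w)] at hyS
    rcases Finset.mem_union.mp hyS with h' | h'
    · exact absurd (cross_edge hacyc hadj y x hadj'.symm h' hx).2 hxw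
    · exact h'

lemma ndeg_sideR_root : ndeg G S r = ndeg G (sideR G S r w) r + 1 := by
  unfold ndeg
  have hset : S.filter (fun y => G.Adj r y) =
      insert w ((sideR G S r w).filter (fun y => G.Adj r y)) := by
    ext y
    simp only [Finset.mem_filter, Finset.mem_insert]
    constructor
    · rintro ⟨hyS, hadj'⟩
      rw [← sideR_union_sideW (G := G) (S := S) (r := r) (w := w)] at hyS
      rcases Finset.mem_union.mp hyS with h' | h'
      · exact Or.inr ⟨h', hadj'⟩
      · exact Or.inl (cross_edge hacyc hadj r y hadj' (r_mem_sideR hr) h').2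
    · rintro (rfl | ⟨hyA, hadj'⟩)
      · exact ⟨hw, hadj⟩
      · exact ⟨sideR_subset hyA, hadj'⟩
  rw [hset, Finset.card_insert_of_notMem, Nat.add_comm]
  intro hc
  exact sideR_disj w (Finset.mem_filter.mp hc).1 (w_mem_sideW hw hadj.ne)

lemma ndeg_sideW_root : ndeg G S w = ndeg G (sideW G S r w) w + 1 := by
  unfold ndeg
  have hset : S.filter (fun y => G.Adj w y) =
      insert r ((sideW G S r w).filter (fun y => G.Adj w y)) := by
    ext y
    simp only [Finset.mem_filter, Finset.mem_insert]
    constructor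
    · rintro ⟨hyS, hadj'⟩
      rw [← sideR_union_sideW (G := G) (S := S) (r := r) (w := w)] at hyS
      rcases Finset.mem_union.mp hyS with h' | h'
      · exact Or.inl (cross_edge hacyc hadj y w hadj'.symm h'
          (w_mem_sideW hw hadj.ne)).1
      · exact Or.inr ⟨h', hadj'⟩
    · rintro (rfl | ⟨hyB, hadj'⟩)
      · exact ⟨hr, hadj.symm⟩
      · exact ⟨sideW_subset hyB, hadj'⟩
  rw [hset, Finset.card_insert_of_notMem, Nat.add_comm]
  intro hc
  exact r_not_mem_sideW (Finset.mem_filter.mp hc).1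

lemma sides_card : (sideR G S r w).card + (sideW G S r w).card = S.card := by
  have h1 : sideW G S r w ⊆ S := sideW_subset
  have h2 : (sideR G S r w).card = S.card - (sideW G S r w).card :=
    Finset.card_sdiff_of_subset h1
  have h3 : (sideW G S r w).card ≤ S.card := Finset.card_le_card h1
  omega

lemma sideR_card_pos : 1 ≤ (sideR G S r w).card :=
  Finset.card_pos.mpr ⟨r, r_mem_sideR hr⟩

lemma sideW_card_pos : 1 ≤ (sideW G S r w).card :=
  Finset.card_pos.mpr ⟨w, w_mem_sideW hw hadj.ne⟩

end DegSplit

end Deg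

section MainLemmas

variable {S : Finset V} {r w : V}

/-- L0: a connected set `S` has at least `|S|` connected subsets containing `r`;
strictness under a branching hypothesis. -/
lemma L0 (hacyc : G.IsAcyclic) :
    ∀ (n : ℕ) (S : Finset V), S.card ≤ n → conn G S → ∀ r ∈ S,
      (S.card ≤ NR G S r ∧
        ((2 ≤ ndeg G S r ∨ ∃ x ∈ S, x ≠ r ∧ 3 ≤ ndeg G S x) →
          S.card + 1 ≤ NR G S r)) := by
  intro n
  induction n with
  | zero =>
      intro S hcard hS r hr
      have := Finset.card_pos.mpr ⟨r, hr⟩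
      omega
  | succ n ih =>
      intro S hcard hS r hr
      by_cases h2 : S.card ≤ 1
      · -- singleton case
        have h1 : S.card = 1 := by
          have := Finset.card_pos.mpr ⟨r, hr⟩
          omega
        obtain ⟨a, ha⟩ := Finset.card_eq_one.mp h1
        subst ha
        have hra : r = a := Finset.mem_singleton.mp hr
        subst hra
        constructor
        · rw [NR, cR_singleton]; simp
        · rintro (hd | ⟨x, hx, hxr, -⟩)
          · -- degree ≥ 2 within a singleton is impossible
            exfalso
            have : ndeg G {r} r ≤ 1 := Finset.card_le_card (Finset.filter_subset _ _) |>.trans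
              (by simp)
            omega
          · exact absurd (Finset.mem_singleton.mp hx) hxr
      · push_neg at h2
        obtain ⟨w, hw, hadj⟩ := exists_adj_of_conn hS hr (by omega)
        have hA : conn G (sideR G S r w) := conn_sideR hacyc hS hr hw hadj
        have hB : conn G (sideW G S r w) := conn_sideW hw hadj.ne
        have hrA : r ∈ sideR G S r w := r_mem_sideR hr
        have hwB : w ∈ sideW G S r w := w_mem_sideW hw hadj.ne
        have hcards := sides_card hacyc hS hr hw hadj
        have ha1 : 1 ≤ (sideR G S r w).card := sideR_card_pos hacyc hS hr hw hadj
        have hb1 : 1 ≤ (sideW G S r w).card := sideW_card_pos hacyc hS hr hw hadj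
        have ihA := ih (sideR G S r w) (by omega) hA r hrA
        have ihB := ih (sideW G S r w) (by omega) hB w hwB
        have hsplit := NR_split hacyc hS hr hw hadj
        set a := (sideR G S r w).card with hadef
        set b := (sideW G S r w).card with hbdef
        have hNRA : a ≤ NR G (sideR G S r w) r := ihA.1
        have hNRB : b ≤ NR G (sideW G S r w) w := ihB.1
        constructor
        · -- plain bound
          rw [hsplit]
          have : a * (1 + b) ≤ NR G (sideR G S r w) r * (1 + NR G (sideW G S r w) w) :=
            Nat.mul_le_mul hNRA (by omega)
          nlinarith
        · rintro (hd | ⟨x, hx, hxr, hx3⟩)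
          · -- degree of r is at least 2 : the r-side has ≥ 2 vertices
            have hdA : 1 ≤ ndeg G (sideR G S r w) r := by
              have := ndeg_sideR_root hacyc hS hr hw hadj
              omega
            obtain ⟨y, hyA, hyadj⟩ := exists_adj_of_ndeg hdA
            have ha2 : 2 ≤ a := by
              have : ({r, y} : Finset V) ⊆ sideR G S r w := by
                intro z hz
                rcases Finset.mem_insert.mp hz with rfl | hz'
                · exact hrA
                · exact (Finset.mem_singleton.mp hz') ▸ hyA
              have := Finset.card_le_card this
              rwa [Finset.card_insert_of_notMem (by
                simp only [Finset.mem_singleton]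
                exact fun hc => G.loopless.irrefl r (hc ▸ hyadj)), Finset.card_singleton] at this
            rw [hsplit]
            have h' : a * (1 + b) ≤ NR G (sideR G S r w) r * (1 + NR G (sideW G S r w) w) :=
              Nat.mul_le_mul hNRA (by omega)
            nlinarith
          · -- a vertex x ≠ r of degree ≥ 3
            have hxS : x ∈ S := hx
            rw [← sideR_union_sideW (G := G) (S := S) (r := r) (w := w)] at hxS
            rw [hsplit]
            rcases Finset.mem_union.mp hxS with hxA | hxB
            · -- x in the r-side
              have : 3 ≤ ndeg G (sideR G S r w) x := by
                rw [ndeg_sideR_eq hacyc hS hr hw hadj hxA hxr]; exact hx3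
              have hNRA' : a + 1 ≤ NR G (sideR G S r w) r :=
                ihA.2 (Or.inr ⟨x, hxA, hxr, this⟩)
              have h' : (a + 1) * (1 + b) ≤
                  NR G (sideR G S r w) r * (1 + NR G (sideW G S r w) w) :=
                Nat.mul_le_mul hNRA' (by omega)
              nlinarith
            · -- x in the w-side
              have hNRB' : b + 1 ≤ NR G (sideW G S r w) w := by
                by_cases hxw : x = w
                · have hx3' : 3 ≤ ndeg G S w := hxw ▸ hx3
                  have : 2 ≤ ndeg G (sideW G S r w) w := by
                    have := ndeg_sideW_root hacyc hS hr hw hadj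
                    omega
                  exact ihB.2 (Or.inl this)
                · have : 3 ≤ ndeg G (sideW G S r w) x := by
                    rw [ndeg_sideW_eq hacyc hS hr hw hadj hxB hxw]; exact hx3
                  exact ihB.2 (Or.inr ⟨x, hxB, hxw, this⟩)
              have h' : a * (1 + (b + 1)) ≤
                  NR G (sideR G S r w) r * (1 + NR G (sideW G S r w) w) :=
                Nat.mul_le_mul hNRA (by omega)
              nlinarith

end MainLemmas

section MainLemmas2

/-- L1: the local mean of subtrees at `r` is at least `(|S|+1)/2`, with strictness
under branching away from `r`. -/
lemma L1 (hacyc : G.IsAcyclic) :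
    ∀ (n : ℕ) (S : Finset V), S.card ≤ n → conn G S → ∀ r ∈ S,
      ((S.card + 1) * NR G S r ≤ 2 * SR G S r ∧
        ((∃ x ∈ S, x ≠ r ∧ 3 ≤ ndeg G S x) →
          (S.card + 1) * NR G S r + 1 ≤ 2 * SR G S r)) := by
  intro n
  induction n with
  | zero =>
      intro S hcard hS r hr
      have := Finset.card_pos.mpr ⟨r, hr⟩
      omega
  | succ n ih =>
      intro S hcard hS r hr
      by_cases h2 : S.card ≤ 1
      · have h1 : S.card = 1 := by
          have := Finset.card_pos.mpr ⟨r, hr⟩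
          omega
        obtain ⟨a, ha⟩ := Finset.card_eq_one.mp h1
        subst ha
        have hra : r = a := Finset.mem_singleton.mp hr
        subst hra
        have hNR : NR G {r} r = 1 := by rw [NR, cR_singleton]; simp
        have hSR : SR G {r} r = 1 := by rw [SR, cR_singleton]; simp
        constructor
        · rw [hNR, hSR, h1]
        · rintro ⟨x, hx, hxr, -⟩
          exact absurd (Finset.mem_singleton.mp hx) hxr
      · push_neg at h2
        obtain ⟨w, hw, hadj⟩ := exists_adj_of_conn hS hr (by omega)
        have hA : conn G (sideR G S r w) := conn_sideR hacyc hS hr hw hadj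
        have hB : conn G (sideW G S r w) := conn_sideW hw hadj.ne
        have hrA : r ∈ sideR G S r w := r_mem_sideR hr
        have hwB : w ∈ sideW G S r w := w_mem_sideW hw hadj.ne
        have hcards := sides_card hacyc hS hr hw hadj
        have ha1 : 1 ≤ (sideR G S r w).card := sideR_card_pos hacyc hS hr hw hadj
        have hb1 : 1 ≤ (sideW G S r w).card := sideW_card_pos hacyc hS hr hw hadj
        have ihA := ih (sideR G S r w) (by omega) hA r hrA
        have ihB := ih (sideW G S r w) (by omega) hB w hwB
        have hNRsplit := NR_split hacyc hS hr hw hadj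
        have hSRsplit := SR_split hacyc hS hr hw hadj
        have hL0B := (L0 hacyc (sideW G S r w).card (sideW G S r w) le_rfl hB w hwB).1
        set a := (sideR G S r w).card
        set b := (sideW G S r w).card
        set NA := NR G (sideR G S r w) r
        set NB := NR G (sideW G S r w) w
        set SA := SR G (sideR G S r w) r
        set SB := SR G (sideW G S r w) w
        have hNA1 : 1 ≤ NA := one_le_NR hA hrA
        have hNB1 : 1 ≤ NB := one_le_NR hB hwB
        constructor
        · rw [hNRsplit, hSRsplit]
          have g1 : (a + 1) * NA * (1 + NB) ≤ 2 * SA * (1 + NB) :=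
            Nat.mul_le_mul ihA.1 le_rfl
          have g2 : NA * ((b + 1) * NB) ≤ NA * (2 * SB) :=
            Nat.mul_le_mul le_rfl ihB.1
          have g3 : NA * b ≤ NA * NB := Nat.mul_le_mul le_rfl hL0B
          nlinarith
        · rintro ⟨x, hx, hxr, hx3⟩
          rw [hNRsplit, hSRsplit]
          have hxS : x ∈ S := hx
          rw [← sideR_union_sideW (G := G) (S := S) (r := r) (w := w)] at hxS
          rcases Finset.mem_union.mp hxS with hxA | hxB
          · -- branching in the r-side : strict L1 there
            have hd : 3 ≤ ndeg G (sideR G S r w) x := by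
              rw [ndeg_sideR_eq hacyc hS hr hw hadj hxA hxr]; exact hx3
            have f1 : (a + 1) * NA + 1 ≤ 2 * SA := ihA.2 ⟨x, hxA, hxr, hd⟩
            have g1 : ((a + 1) * NA + 1) * (1 + NB) ≤ 2 * SA * (1 + NB) :=
              Nat.mul_le_mul f1 le_rfl
            have g2 : NA * ((b + 1) * NB) ≤ NA * (2 * SB) :=
              Nat.mul_le_mul le_rfl ihB.1
            have g3 : NA * b ≤ NA * NB := Nat.mul_le_mul le_rfl hL0B
            nlinarith
          · -- branching in the w-side : strict L0 there
            have hL0B' : b + 1 ≤ NB := by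
              by_cases hxw : x = w
              · have hx3' : 3 ≤ ndeg G S w := hxw ▸ hx3
                have : 2 ≤ ndeg G (sideW G S r w) w := by
                  have := ndeg_sideW_root hacyc hS hr hw hadj
                  omega
                exact (L0 hacyc b (sideW G S r w) le_rfl hB w hwB).2 (Or.inl this)
              · have : 3 ≤ ndeg G (sideW G S r w) x := by
                  rw [ndeg_sideW_eq hacyc hS hr hw hadj hxB hxw]; exact hx3
                exact (L0 hacyc b (sideW G S r w) le_rfl hB w hwB).2
                  (Or.inr ⟨x, hxB, hxw, this⟩)
            have g1 : (a + 1) * NA * (1 + NB) ≤ 2 * SA * (1 + NB) :=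
              Nat.mul_le_mul ihA.1 le_rfl
            have g2 : NA * ((b + 1) * NB) ≤ NA * (2 * SB) :=
              Nat.mul_le_mul le_rfl ihB.1
            have g3 : NA * (b + 1) ≤ NA * NB := Nat.mul_le_mul le_rfl hL0B'
            nlinarith

/-- C': the total size of the subtrees at `r` dominates the total number of subtrees. -/
lemma Cp (hacyc : G.IsAcyclic) :
    ∀ (n : ℕ) (S : Finset V), S.card ≤ n → conn G S → ∀ r ∈ S,
      NN G S ≤ SR G S r := by
  intro n
  induction n with
  | zero =>
      intro S hcard hS r hr
      have := Finset.card_pos.mpr ⟨r, hr⟩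
      omega
  | succ n ih =>
      intro S hcard hS r hr
      by_cases h2 : S.card ≤ 1
      · have h1 : S.card = 1 := by
          have := Finset.card_pos.mpr ⟨r, hr⟩
          omega
        obtain ⟨a, ha⟩ := Finset.card_eq_one.mp h1
        subst ha
        have hra : r = a := Finset.mem_singleton.mp hr
        subst hra
        have hNN : NN G {r} = 1 := by rw [NN, cS_singleton]; simp
        have hSR : SR G {r} r = 1 := by rw [SR, cR_singleton]; simp
        omega
      · push_neg at h2
        obtain ⟨w, hw, hadj⟩ := exists_adj_of_conn hS hr (by omega)
        have hA : conn G (sideR G S r w) := conn_sideR hacyc hS hr hw hadj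
        have hB : conn G (sideW G S r w) := conn_sideW hw hadj.ne
        have hrA : r ∈ sideR G S r w := r_mem_sideR hr
        have hwB : w ∈ sideW G S r w := w_mem_sideW hw hadj.ne
        have hcards := sides_card hacyc hS hr hw hadj
        have ha1 : 1 ≤ (sideR G S r w).card := sideR_card_pos hacyc hS hr hw hadj
        have hb1 : 1 ≤ (sideW G S r w).card := sideW_card_pos hacyc hS hr hw hadj
        have ihA := ih (sideR G S r w) (by omega) hA r hrA
        have ihB := ih (sideW G S r w) (by omega) hB w hwB
        have hNNsplit := NN_split hacyc hS hr hw hadj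
        have hSRsplit := SR_split hacyc hS hr hw hadj
        set NA := NR G (sideR G S r w) r
        set NB := NR G (sideW G S r w) w
        set SA := SR G (sideR G S r w) r
        set SB := SR G (sideW G S r w) w
        have hNA1 : 1 ≤ NA := one_le_NR hA hrA
        have hNASA : NA ≤ SA := NR_le_SR
        rw [hNNsplit, hSRsplit]
        have g1 : NA * NB ≤ SA * NB := Nat.mul_le_mul hNASA le_rfl
        have g2 : 1 * NN G (sideW G S r w) ≤ NA * SB := Nat.mul_le_mul hNA1 ihB
        nlinarith

end MainLemmas2

section Global

set_option maxHeartbeats 1000000 in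
/-- The global bound: `3 * (sum of subtree sizes) ≥ (|S|+2) * (number of subtrees)`,
with strictness in the presence of a vertex of degree at least 3. -/
lemma GLB (hacyc : G.IsAcyclic) :
    ∀ (n : ℕ) (S : Finset V), S.card ≤ n → conn G S →
      ((S.card + 2) * NN G S ≤ 3 * SS G S ∧
        ((∃ x ∈ S, 3 ≤ ndeg G S x) →
          (S.card + 2) * NN G S + 1 ≤ 3 * SS G S)) := by
  intro n
  induction n with
  | zero =>
      intro S hcard hS
      obtain ⟨y, hy⟩ := hS.1
      have := Finset.card_pos.mpr ⟨y, hy⟩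
      omega
  | succ n ih =>
      intro S hcard hS
      by_cases h2 : S.card ≤ 1
      · obtain ⟨y, hy⟩ := hS.1
        have h1 : S.card = 1 := by
          have := Finset.card_pos.mpr ⟨y, hy⟩
          omega
        obtain ⟨a, ha⟩ := Finset.card_eq_one.mp h1
        subst ha
        have hNN : NN G {a} = 1 := by rw [NN, cS_singleton]; simp
        have hSS : SS G {a} = 1 := by rw [SS, cS_singleton]; simp
        constructor
        · rw [hNN, hSS, h1]
        · rintro ⟨x, hx, hx3⟩
          exfalso
          have : ndeg G {a} x ≤ 1 :=
            (Finset.card_le_card (Finset.filter_subset _ _)).trans (by simp)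
          omega
      · push_neg at h2
        -- the main work, for an arbitrary root vertex `r` with neighbour `w`
        have main : ∀ r ∈ S, ∀ w ∈ S, G.Adj r w →
            ((S.card + 2) * NN G S ≤ 3 * SS G S ∧
              (3 ≤ ndeg G S r → (S.card + 2) * NN G S + 1 ≤ 3 * SS G S)) := by
          intro r hr w hw hadj
          have hA : conn G (sideR G S r w) := conn_sideR hacyc hS hr hw hadj
          have hB : conn G (sideW G S r w) := conn_sideW hw hadj.ne
          have hrA : r ∈ sideR G S r w := r_mem_sideR hr
          have hwB : w ∈ sideW G S r w := w_mem_sideW hw hadj.ne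
          have hcards := sides_card hacyc hS hr hw hadj
          have ha1 : 1 ≤ (sideR G S r w).card := sideR_card_pos hacyc hS hr hw hadj
          have hb1 : 1 ≤ (sideW G S r w).card := sideW_card_pos hacyc hS hr hw hadj
          have ihA := (ih (sideR G S r w) (by omega) hA).1
          have ihB := (ih (sideW G S r w) (by omega) hB).1
          have hNNsplit := NN_split hacyc hS hr hw hadj
          have hSSsplit := SS_split hacyc hS hr hw hadj
          have hL1A := (L1 hacyc _ (sideR G S r w) le_rfl hA r hrA).1
          have hL1B := (L1 hacyc _ (sideW G S r w) le_rfl hB w hwB).1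
          have hCpA := Cp hacyc _ (sideR G S r w) le_rfl hA r hrA
          have hCpB := Cp hacyc _ (sideW G S r w) le_rfl hB w hwB
          have hL0A := (L0 hacyc _ (sideR G S r w) le_rfl hA r hrA).1
          have hL0B := (L0 hacyc _ (sideW G S r w) le_rfl hB w hwB).1
          set a := (sideR G S r w).card
          set b := (sideW G S r w).card
          set NA := NR G (sideR G S r w) r
          set NB := NR G (sideW G S r w) w
          set SA := SR G (sideR G S r w) r
          set SB := SR G (sideW G S r w) w
          set MA := NN G (sideR G S r w)
          set MB := NN G (sideW G S r w)
          set TA := SS G (sideR G S r w)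
          set TB := SS G (sideW G S r w)
          have hMB1 : 1 ≤ MB := one_le_NN hB
          constructor
          · rw [hNNsplit, hSSsplit, ← hcards]
            have g1 : (a + 1) * NA * NB ≤ 2 * SA * NB := Nat.mul_le_mul hL1A le_rfl
            have g2 : MA * b ≤ SA * NB := Nat.mul_le_mul hCpA hL0B
            have g3 : NA * ((b + 1) * NB) ≤ NA * (2 * SB) := Nat.mul_le_mul le_rfl hL1B
            have g4 : a * MB ≤ NA * SB := Nat.mul_le_mul hL0A hCpB
            nlinarith [ihA, ihB, g1, g2, g3, g4]
          · intro hd3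
            -- r has degree ≥ 3, so degree ≥ 2 in its side : strict L0 on the r-side
            have hL0A' : a + 1 ≤ NA := by
              have hdA : 2 ≤ ndeg G (sideR G S r w) r := by
                have := ndeg_sideR_root hacyc hS hr hw hadj
                omega
              exact (L0 hacyc _ (sideR G S r w) le_rfl hA r hrA).2 (Or.inl hdA)
            rw [hNNsplit, hSSsplit, ← hcards]
            have g1 : (a + 1) * NA * NB ≤ 2 * SA * NB := Nat.mul_le_mul hL1A le_rfl
            have g2 : MA * b ≤ SA * NB := Nat.mul_le_mul hCpA hL0B
            have g3 : NA * ((b + 1) * NB) ≤ NA * (2 * SB) := Nat.mul_le_mul le_rfl hL1B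
            have g4 : (a + 1) * MB ≤ NA * SB := Nat.mul_le_mul hL0A' hCpB
            linarith [ihA, ihB, g1, g2, g3, g4, hMB1]
        obtain ⟨r₀, hr₀⟩ := hS.1
        obtain ⟨w₀, hw₀, hadj₀⟩ := exists_adj_of_conn hS hr₀ (by omega)
        refine ⟨(main r₀ hr₀ w₀ hw₀ hadj₀).1, ?_⟩
        rintro ⟨x, hx, hx3⟩
        obtain ⟨y, hy, hady⟩ := exists_adj_of_ndeg (le_trans (by omega) hx3)
        exact (main x hx y hy hady).2 hx3

end Global

section PathCount

variable {S : Finset V} {r w : V}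

lemma sideR_singleton (hacyc : G.IsAcyclic) (hS : conn G S) (hr : r ∈ S) (hw : w ∈ S)
    (hadj : G.Adj r w) (hdeg : ndeg G S r ≤ 1) : sideR G S r w = {r} := by
  apply Finset.Subset.antisymm
  · intro x hx
    have hA : conn G (sideR G S r w) := conn_sideR hacyc hS hr hw hadj
    obtain ⟨p, hp⟩ := hA.2 r (r_mem_sideR hr) x hx
    cases p with
    | nil => simp
    | @cons _ c _ h t =>
        exfalso
        have hcA : c ∈ sideR G S r w := hp c (by simp [Walk.support_cons, t.start_mem_support])
        have hcw : c ≠ w := by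
          intro hc
          exact sideR_disj c hcA (by rw [hc]; exact w_mem_sideW hw hadj.ne)
        have hsub : ({w, c} : Finset V) ⊆ S.filter (fun y => G.Adj r y) := by
          intro z hz
          rcases Finset.mem_insert.mp hz with rfl | hz'
          · exact Finset.mem_filter.mpr ⟨hw, hadj⟩
          · rw [Finset.mem_singleton] at hz'
            subst hz'
            exact Finset.mem_filter.mpr ⟨sideR_subset hcA, h⟩
        have h2 : 2 ≤ ndeg G S r := by
          have hcard := Finset.card_le_card hsub
          rwa [Finset.card_insert_of_notMem (by simpa using fun hc => hcw hc.symm),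
            Finset.card_singleton] at hcard
        omega
  · intro x hx
    rw [Finset.mem_singleton] at hx
    subst hx
    exact r_mem_sideR hr

/-- Exact counts for subtrees at an end of a path. -/
lemma PathR (hacyc : G.IsAcyclic) :
    ∀ (n : ℕ) (S : Finset V), S.card ≤ n → conn G S → ∀ r ∈ S, ndeg G S r ≤ 1 →
      (∀ x ∈ S, ndeg G S x ≤ 2) →
      (NR G S r = S.card ∧ 2 * SR G S r = S.card * (S.card + 1)) := by
  intro n
  induction n with
  | zero =>
      intro S hcard hS r hr
      have := Finset.card_pos.mpr ⟨r, hr⟩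
      omega
  | succ n ih =>
      intro S hcard hS r hr hdeg hdegall
      by_cases h2 : S.card ≤ 1
      · have h1 : S.card = 1 := by
          have := Finset.card_pos.mpr ⟨r, hr⟩
          omega
        obtain ⟨a, ha⟩ := Finset.card_eq_one.mp h1
        subst ha
        have hra : r = a := Finset.mem_singleton.mp hr
        subst hra
        have hNR : NR G {r} r = 1 := by rw [NR, cR_singleton]; simp
        have hSR : SR G {r} r = 1 := by rw [SR, cR_singleton]; simp
        rw [hNR, hSR, h1]
        exact ⟨rfl, by norm_num⟩
      · push_neg at h2
        obtain ⟨w, hw, hadj⟩ := exists_adj_of_conn hS hr (by omega)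
        have hB : conn G (sideW G S r w) := conn_sideW hw hadj.ne
        have hwB : w ∈ sideW G S r w := w_mem_sideW hw hadj.ne
        have hcards := sides_card hacyc hS hr hw hadj
        have hAsing : sideR G S r w = {r} := sideR_singleton hacyc hS hr hw hadj hdeg
        have ha1 : (sideR G S r w).card = 1 := by rw [hAsing]; simp
        have hNRA : NR G (sideR G S r w) r = 1 := by rw [hAsing, NR, cR_singleton]; simp
        have hSRA : SR G (sideR G S r w) r = 1 := by rw [hAsing, SR, cR_singleton]; simp
        have hdegB : ndeg G (sideW G S r w) w ≤ 1 := by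
          have h' := ndeg_sideW_root hacyc hS hr hw hadj
          have h'' := hdegall w hw
          omega
        have hdegallB : ∀ x ∈ sideW G S r w, ndeg G (sideW G S r w) x ≤ 2 := by
          intro x hx
          by_cases hxw : x = w
          · subst hxw; omega
          · rw [ndeg_sideW_eq hacyc hS hr hw hadj hx hxw]
            exact hdegall x (sideW_subset hx)
        obtain ⟨hNRB, hSRB⟩ := ih (sideW G S r w) (by omega) hB w hwB hdegB hdegallB
        have hNRsplit := NR_split hacyc hS hr hw hadj
        have hSRsplit := SR_split hacyc hS hr hw hadj
        rw [hNRA, hNRB] at hNRsplit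
        rw [hSRA, hNRA, hNRB] at hSRsplit
        set b := (sideW G S r w).card with hbdef
        have hSb : S.card = b + 1 := by omega
        constructor
        · rw [hNRsplit]; omega
        · rw [hSRsplit, hSb]
          have e1 : 2 * (1 * (1 + b) + 1 * SR G (sideW G S r w) w) =
              2 * (1 + b) + 2 * SR G (sideW G S r w) w := by ring
          rw [e1, hSRB]
          ring

/-- Exact global counts for a path. -/
lemma PathNN (hacyc : G.IsAcyclic) :
    ∀ (n : ℕ) (S : Finset V), S.card ≤ n → conn G S →
      (∀ x ∈ S, ndeg G S x ≤ 2) →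
      (2 * NN G S = S.card * (S.card + 1) ∧
        6 * SS G S = S.card * (S.card + 1) * (S.card + 2)) := by
  intro n
  induction n with
  | zero =>
      intro S hcard hS
      obtain ⟨y, hy⟩ := hS.1
      have := Finset.card_pos.mpr ⟨y, hy⟩
      omega
  | succ n ih =>
      intro S hcard hS hdegall
      obtain ⟨r, hr⟩ := hS.1
      by_cases h2 : S.card ≤ 1
      · have h1 : S.card = 1 := by
          have := Finset.card_pos.mpr ⟨r, hr⟩
          omega
        obtain ⟨a, ha⟩ := Finset.card_eq_one.mp h1
        subst ha
        have hNN : NN G {a} = 1 := by rw [NN, cS_singleton]; simp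
        have hSS : SS G {a} = 1 := by rw [SS, cS_singleton]; simp
        rw [hNN, hSS, h1]
        exact ⟨rfl, rfl⟩
      · push_neg at h2
        obtain ⟨w, hw, hadj⟩ := exists_adj_of_conn hS hr (by omega)
        have hA : conn G (sideR G S r w) := conn_sideR hacyc hS hr hw hadj
        have hB : conn G (sideW G S r w) := conn_sideW hw hadj.ne
        have hrA : r ∈ sideR G S r w := r_mem_sideR hr
        have hwB : w ∈ sideW G S r w := w_mem_sideW hw hadj.ne
        have hcards := sides_card hacyc hS hr hw hadj
        have ha1 : 1 ≤ (sideR G S r w).card := sideR_card_pos hacyc hS hr hw hadj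
        have hb1 : 1 ≤ (sideW G S r w).card := sideW_card_pos hacyc hS hr hw hadj
        -- degree conditions on the sides
        have hdegA : ndeg G (sideR G S r w) r ≤ 1 := by
          have h' := ndeg_sideR_root hacyc hS hr hw hadj
          have h'' := hdegall r hr
          omega
        have hdegallA : ∀ x ∈ sideR G S r w, ndeg G (sideR G S r w) x ≤ 2 := by
          intro x hx
          by_cases hxr : x = r
          · subst hxr; omega
          · rw [ndeg_sideR_eq hacyc hS hr hw hadj hx hxr]
            exact hdegall x (sideR_subset hx)
        have hdegB : ndeg G (sideW G S r w) w ≤ 1 := by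
          have h' := ndeg_sideW_root hacyc hS hr hw hadj
          have h'' := hdegall w hw
          omega
        have hdegallB : ∀ x ∈ sideW G S r w, ndeg G (sideW G S r w) x ≤ 2 := by
          intro x hx
          by_cases hxw : x = w
          · subst hxw; omega
          · rw [ndeg_sideW_eq hacyc hS hr hw hadj hx hxw]
            exact hdegall x (sideW_subset hx)
        obtain ⟨hNRA, hSRA⟩ := PathR hacyc _ (sideR G S r w) le_rfl hA r hrA hdegA hdegallA
        obtain ⟨hNRB, hSRB⟩ := PathR hacyc _ (sideW G S r w) le_rfl hB w hwB hdegB hdegallB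
        obtain ⟨hNNA, hSSA⟩ := ih (sideR G S r w) (by omega) hA hdegallA
        obtain ⟨hNNB, hSSB⟩ := ih (sideW G S r w) (by omega) hB hdegallB
        have hNNsplit := NN_split hacyc hS hr hw hadj
        have hSSsplit := SS_split hacyc hS hr hw hadj
        rw [hNRA, hNRB] at hNNsplit hSSsplit
        set a := (sideR G S r w).card
        set b := (sideW G S r w).card
        rw [hNNsplit, hSSsplit, ← hcards]
        constructor
        · zify at hNNA hNNB ⊢
          linear_combination hNNA + hNNB
        · zify at hSSA hSSB hSRA hSRB ⊢
          linear_combination hSSA + hSSB + 3 * (b : ℤ) * hSRA + 3 * (a : ℤ) * hSRB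

end PathCount

section Transfer

variable [Fintype V]

lemma subgraph_finite : Finite (G.Subgraph) := by
  have : Function.Injective (fun H : G.Subgraph => (H.verts, H.Adj)) := by
    intro H₁ H₂ h
    simp only [Prod.mk.injEq] at h
    exact SimpleGraph.Subgraph.ext h.1 h.2
  exact Finite.of_injective _ this

variable (G) in
/-- The subgraph induced by a vertex set. -/
noncomputable def toSub (T : Finset V) : G.Subgraph where
  verts := ↑T
  Adj a b := a ∈ T ∧ b ∈ T ∧ G.Adj a b
  adj_sub h := h.2.2
  edge_vert h := h.1
  symm := ⟨fun a b h => ⟨h.2.1, h.1, h.2.2.symm⟩⟩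

lemma toSub_verts (T : Finset V) : (toSub G T).verts = ↑T := rfl

lemma lift_reachable {T : Finset V} :
    ∀ {x y : V} (p : G.Walk x y), (∀ z ∈ p.support, z ∈ T) →
      ∀ (hx : x ∈ (toSub G T).verts) (hy : y ∈ (toSub G T).verts),
      (toSub G T).coe.Reachable ⟨x, hx⟩ ⟨y, hy⟩ := by
  intro x y p
  induction p with
  | nil => intro _ hx hy; exact SimpleGraph.Reachable.refl _
  | @cons u c v h q ih =>
      intro hp hx hy
      have hcT : c ∈ T := hp c (by simp [Walk.support_cons, q.start_mem_support])
      have hc' : c ∈ (toSub G T).verts := by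
        rw [toSub_verts]; exact_mod_cast hcT
      have hadj : (toSub G T).coe.Adj ⟨u, hx⟩ ⟨c, hc'⟩ := by
        show (toSub G T).Adj u c
        exact ⟨by exact_mod_cast hx, hcT, h⟩
      exact hadj.reachable.trans
        (ih (fun z hz => hp z (by simp [Walk.support_cons, hz])) hc' hy)

lemma coe_acyclic (hacyc : G.IsAcyclic) (H : G.Subgraph) : H.coe.IsAcyclic := by
  intro v c hc
  exact hacyc (c.map H.hom) (hc.map SimpleGraph.Subgraph.hom_injective)

lemma isSubtree_toSub (hacyc : G.IsAcyclic) {T : Finset V} (hT : conn G T) :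
    (toSub G T).IsSubtree := by
  refine ⟨?_, ?_, coe_acyclic hacyc _⟩
  · obtain ⟨x, hx⟩ := hT.1
    exact ⟨x, by rw [toSub_verts]; exact_mod_cast hx⟩
  · rw [SimpleGraph.connected_iff]
    constructor
    · rintro ⟨x, hx⟩ ⟨y, hy⟩
      obtain ⟨p, hp⟩ := hT.2 x (by exact_mod_cast hx) y (by exact_mod_cast hy)
      exact lift_reachable p hp hx hy
    · obtain ⟨x, hx⟩ := hT.1
      exact ⟨⟨x, by rw [toSub_verts]; exact_mod_cast hx⟩⟩

variable (G) in
/-- The vertex set of a subgraph, as a finset. -/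
noncomputable def vertsF (H : G.Subgraph) : Finset V := (Set.toFinite H.verts).toFinset

lemma mem_vertsF {H : G.Subgraph} {x : V} : x ∈ vertsF G H ↔ x ∈ H.verts :=
  Set.Finite.mem_toFinset _

lemma conn_vertsF {H : G.Subgraph} (h : H.IsSubtree) : conn G (vertsF G H) := by
  constructor
  · obtain ⟨x, hx⟩ := h.1
    exact ⟨x, mem_vertsF.mpr hx⟩
  · intro x hx y hy
    obtain ⟨q⟩ := h.2.1.preconnected ⟨x, mem_vertsF.mp hx⟩ ⟨y, mem_vertsF.mp hy⟩
    refine ⟨q.map H.hom, ?_⟩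
    intro z hz
    change z ∈ (q.map H.hom).support at hz
    rw [Walk.support_map, List.mem_map] at hz
    obtain ⟨z', hz', rfl⟩ := hz
    exact mem_vertsF.mpr z'.2

lemma adj_iff_of_isSubtree (hG : G.IsTree) {H : G.Subgraph} (h : H.IsSubtree)
    {a b : V} : H.Adj a b ↔ a ∈ H.verts ∧ b ∈ H.verts ∧ G.Adj a b := by
  constructor
  · intro hadj
    exact ⟨H.edge_vert hadj, H.edge_vert hadj.symm, H.adj_sub hadj⟩
  · rintro ⟨ha, hb, hGadj⟩
    obtain ⟨q⟩ := h.2.1.preconnected ⟨a, ha⟩ ⟨b, hb⟩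
    set π := q.toPath with hπ
    have hmapped : (π.val.map H.hom).IsPath :=
      (SimpleGraph.Walk.map_isPath_iff_of_injective
        SimpleGraph.Subgraph.hom_injective).mpr π.prop
    have huniq := hG.IsAcyclic.path_unique
      ⟨π.val.map H.hom, hmapped⟩ (SimpleGraph.Path.singleton hGadj)
    have hlen : (π.val.map H.hom).length = 1 := by
      have := congrArg (fun p : G.Path a b => p.val.length) huniq
      simpa [SimpleGraph.Path.singleton] using this
    rw [Walk.length_map] at hlen
    have := SimpleGraph.Walk.adj_of_length_eq_one (p := π.val) hlen
    exact (SimpleGraph.Subgraph.coe_adj H _ _).mp this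

lemma eq_of_verts_eq (hG : G.IsTree) {H₁ H₂ : G.Subgraph}
    (h₁ : H₁.IsSubtree) (h₂ : H₂.IsSubtree) (h : H₁.verts = H₂.verts) : H₁ = H₂ := by
  refine SimpleGraph.Subgraph.ext h ?_
  ext a b
  rw [adj_iff_of_isSubtree hG h₁, adj_iff_of_isSubtree hG h₂, h]

lemma toSub_isSubtree_iff (hG : G.IsTree) {T : Finset V} :
    (toSub G T).IsSubtree ↔ conn G T := by
  constructor
  · intro h
    have := conn_vertsF h
    have he : vertsF G (toSub G T) = T := by
      ext x; rw [mem_vertsF, toSub_verts]; exact Finset.mem_coe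
    rwa [he] at this
  · exact isSubtree_toSub hG.IsAcyclic

/-- The main counting transfer: subtree subgraphs of a tree biject with
connected vertex sets. -/
lemma sum_transfer (hG : G.IsTree) (f : ℕ → ℕ) :
    haveI : Finite (G.Subgraph) := subgraph_finite
    ∑ H ∈ (Set.toFinite {H : G.Subgraph | H.IsSubtree}).toFinset, f (H.verts.ncard) =
      ∑ T ∈ cS G Finset.univ, f T.card := by
  haveI : Finite (G.Subgraph) := subgraph_finite
  refine Finset.sum_bij' (fun H _ => vertsF G H) (fun T _ => toSub G T) ?_ ?_ ?_ ?_ ?_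
  · intro H hH
    have h : H.IsSubtree := by simpa using hH
    exact mem_cS.mpr ⟨Finset.subset_univ _, conn_vertsF h⟩
  · intro T hT
    rw [Set.Finite.mem_toFinset]
    exact isSubtree_toSub hG.IsAcyclic (mem_cS.mp hT).2
  · intro H hH
    have h : H.IsSubtree := by simpa using hH
    show toSub G (vertsF G H) = H
    refine eq_of_verts_eq hG ?_ h ?_
    · exact isSubtree_toSub hG.IsAcyclic (conn_vertsF h)
    · rw [toSub_verts]
      ext x
      rw [Finset.mem_coe, mem_vertsF]
  · intro T hT
    ext x
    rw [mem_vertsF, toSub_verts]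
    exact Finset.mem_coe
  · intro H hH
    congr 1
    rw [Set.ncard_eq_toFinset_card' H.verts]
    congr 1
    ext x
    rw [mem_vertsF, Set.mem_toFinset]

end Transfer

section Iso

variable [Fintype V]

lemma conn_univ (hG : G.IsTree) : conn G (Finset.univ : Finset V) := by
  have : Nonempty V := hG.isConnected.nonempty
  refine ⟨Finset.univ_nonempty, ?_⟩
  intro x _ y _
  obtain ⟨p⟩ := hG.isConnected.preconnected x y
  exact ⟨p, fun z _ => Finset.mem_univ z⟩

lemma ndeg_univ_eq_degree (v : V) [DecidableRel G.Adj] :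
    ndeg G Finset.univ v = G.degree v := by
  unfold ndeg
  rw [SimpleGraph.degree]
  congr 1
  ext y
  simp [SimpleGraph.mem_neighborFinset]

lemma exists_leaf (hG : G.IsTree) (h2 : 2 ≤ Fintype.card V) :
    ∃ ℓ : V, ndeg G Finset.univ ℓ = 1 := by
  classical
  have hedge : G.edgeFinset.card + 1 = Fintype.card V := hG.card_edgeFinset
  have hsum : ∑ v, G.degree v = 2 * G.edgeFinset.card :=
    SimpleGraph.sum_degrees_eq_twice_card_edges G
  by_contra hno
  push_neg at hno
  have hge : ∀ v : V, 2 ≤ G.degree v := by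
    intro v
    have h1 : 1 ≤ ndeg G Finset.univ v := by
      obtain ⟨w, hw, hadj⟩ := exists_adj_of_conn (conn_univ hG) (Finset.mem_univ v)
        (by rwa [Finset.card_univ])
      exact one_le_ndeg_of_adj hw hadj
    have h2' := hno v
    rw [ndeg_univ_eq_degree] at h1 h2'
    omega
  have : 2 * Fintype.card V ≤ ∑ v, G.degree v := by
    calc 2 * Fintype.card V = ∑ _v : V, 2 := by
          rw [Finset.sum_const, Finset.card_univ, smul_eq_mul, mul_comm]
      _ ≤ ∑ v, G.degree v := Finset.sum_le_sum (fun v _ => hge v)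
  omega

lemma dist_adj_le (hG : G.IsTree) {ℓ u v : V} (h : G.Adj u v) :
    G.dist ℓ v ≤ G.dist ℓ u + 1 := by
  have h1 : G.dist u v ≤ 1 := by
    have := SimpleGraph.dist_le (Walk.cons h Walk.nil)
    simpa using this
  have := hG.isConnected.dist_triangle (u := ℓ) (v := u) (w := v)
  omega

lemma exists_penult (hG : G.IsTree) {ℓ v : V} (hv : 1 ≤ G.dist ℓ v) :
    ∃ u, G.Adj u v ∧ G.dist ℓ u + 1 = G.dist ℓ v := by
  obtain ⟨p, hp⟩ := hG.isConnected.exists_walk_length_eq_dist v ℓ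
  rw [SimpleGraph.dist_comm] at hp
  cases p with
  | nil =>
      exfalso
      rw [SimpleGraph.dist_self] at hv
      omega
  | @cons _ c _ h t =>
      refine ⟨c, h.symm, ?_⟩
      have hlen : t.length + 1 = G.dist ℓ v := by
        have := hp
        rwa [Walk.length_cons] at this
      have h1 : G.dist ℓ c ≤ t.length := by
        have := SimpleGraph.dist_le t.reverse
        rwa [Walk.length_reverse] at this
      have h2 : G.dist ℓ v ≤ G.dist ℓ c + 1 := dist_adj_le hG h.symm
      omega

lemma dist_lt_card (hG : G.IsTree) (ℓ v : V) : G.dist ℓ v < Fintype.card V := by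
  obtain ⟨p, hp, -⟩ := hG.existsUnique_path ℓ v
  exact lt_of_le_of_lt (SimpleGraph.dist_le p) hp.length_lt

lemma dist_inj (hG : G.IsTree) {ℓ : V} (hleaf : ndeg G Finset.univ ℓ ≤ 1)
    (hdeg : ∀ x, ndeg G Finset.univ x ≤ 2) :
    ∀ (k : ℕ) (u v : V), G.dist ℓ u = k → G.dist ℓ v = k → u = v := by
  intro k
  induction k using Nat.strong_induction_on with
  | _ k ih =>
      intro u v hu hv
      cases k with
      | zero =>
          have h1 : ℓ = u := (hG.isConnected.dist_eq_zero_iff).mp hu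
          have h2 : ℓ = v := (hG.isConnected.dist_eq_zero_iff).mp hv
          rw [← h1, ← h2]
      | succ k =>
          by_contra hne
          obtain ⟨u', hadju, hu'⟩ := exists_penult hG (ℓ := ℓ) (v := u) (by omega)
          obtain ⟨v', hadjv, hv'⟩ := exists_penult hG (ℓ := ℓ) (v := v) (by omega)
          have heq : u' = v' := ih k (by omega) u' v' (by omega) (by omega)
          subst heq
          -- u and v are distinct neighbours of u'
          have hmem : ∀ z, G.Adj u' z → z ∈ Finset.univ.filter (fun y => G.Adj u' y) :=
            fun z hz => Finset.mem_filter.mpr ⟨Finset.mem_univ z, hz⟩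
          cases k with
          | zero =>
              -- u' = ℓ but ℓ is a leaf
              have hℓ : ℓ = u' := (hG.isConnected.dist_eq_zero_iff).mp (by omega)
              have hsub : ({u, v} : Finset V) ⊆
                  Finset.univ.filter (fun y => G.Adj u' y) := by
                intro z hz
                rcases Finset.mem_insert.mp hz with rfl | hz'
                · exact hmem z hadju
                · rw [Finset.mem_singleton] at hz'
                  subst hz'
                  exact hmem z hadjv
              have hc := Finset.card_le_card hsub
              rw [Finset.card_insert_of_notMem (by simpa using hne),
                Finset.card_singleton] at hc
              have := hleaf
              rw [hℓ] at this
              unfold ndeg at this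
              omega
          | succ m =>
              -- u' has a third neighbour towards ℓ
              obtain ⟨z, hadjz, hz⟩ := exists_penult hG (ℓ := ℓ) (v := u') (by omega)
              have hzu : z ≠ u := by
                intro hc
                subst hc
                omega
              have hzv : z ≠ v := by
                intro hc
                subst hc
                omega
              have hsub : ({u, v, z} : Finset V) ⊆
                  Finset.univ.filter (fun y => G.Adj u' y) := by
                intro t ht
                rcases Finset.mem_insert.mp ht with rfl | ht'
                · exact hmem t hadju
                · rcases Finset.mem_insert.mp ht' with rfl | ht''
                  · exact hmem t hadjv
                  · rw [Finset.mem_singleton] at ht''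
                    subst ht''
                    exact hmem t hadjz.symm
              have hc := Finset.card_le_card hsub
              have hcard3 : ({u, v, z} : Finset V).card = 3 := by
                rw [Finset.card_insert_of_notMem (by simp [hne, hzu.symm, hzv.symm]),
                  Finset.card_insert_of_notMem (by simpa using hzv.symm),
                  Finset.card_singleton]
              have := hdeg u'
              unfold ndeg at this
              omega

lemma exists_iso (hG : G.IsTree) (hdeg : ∀ x, ndeg G Finset.univ x ≤ 2) :
    Nonempty (G ≃g SimpleGraph.pathGraph (Fintype.card V)) := by
  classical
  have hne : Nonempty V := hG.isConnected.nonempty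
  have hn1 : 1 ≤ Fintype.card V := Fintype.card_pos
  by_cases hn : Fintype.card V ≤ 1
  · -- a single vertex
    have hsub : Subsingleton V := Fintype.card_le_one_iff_subsingleton.mp hn
    refine ⟨⟨Fintype.equivFin V, ?_⟩⟩
    intro u v
    have huv : u = v := Subsingleton.elim u v
    subst huv
    constructor
    · intro h
      exact absurd h (SimpleGraph.irrefl _)
    · intro h
      exact absurd h (G.irrefl)
  · push_neg at hn
    obtain ⟨ℓ, hleaf⟩ := exists_leaf hG hn
    have hlt : ∀ v, G.dist ℓ v < Fintype.card V := dist_lt_card hG ℓ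
    set F : V → Fin (Fintype.card V) := fun v => ⟨G.dist ℓ v, hlt v⟩ with hF
    have hinj : Function.Injective F := by
      intro u v huv
      have : G.dist ℓ u = G.dist ℓ v := by
        have := congrArg Fin.val huv
        simpa [hF] using this
      exact dist_inj hG (le_of_eq hleaf) hdeg (G.dist ℓ v) u v this rfl
    have hbij : Function.Bijective F :=
      (Fintype.bijective_iff_injective_and_card F).mpr ⟨hinj, by simp⟩
    refine ⟨⟨Equiv.ofBijective F hbij, ?_⟩⟩
    intro u v
    show (SimpleGraph.pathGraph (Fintype.card V)).Adj (F u) (F v) ↔ G.Adj u v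
    rw [SimpleGraph.pathGraph_adj]
    constructor
    · rintro (h | h)
      · -- dist u + 1 = dist v
        simp only [hF] at h
        obtain ⟨u'', hadj, hu''⟩ := exists_penult hG (ℓ := ℓ) (v := v) (by omega)
        have : u'' = u := dist_inj hG (le_of_eq hleaf) hdeg _ u'' u (by omega) rfl
        subst this
        exact hadj
      · simp only [hF] at h
        obtain ⟨u'', hadj, hu''⟩ := exists_penult hG (ℓ := ℓ) (v := u) (by omega)
        have : u'' = v := dist_inj hG (le_of_eq hleaf) hdeg _ u'' v (by omega) rfl
        subst this
        exact hadj.symm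
    · intro hadj
      have h1 : G.dist ℓ v ≤ G.dist ℓ u + 1 := dist_adj_le hG hadj
      have h2 : G.dist ℓ u ≤ G.dist ℓ v + 1 := dist_adj_le hG hadj.symm
      have h3 : G.dist ℓ u ≠ G.dist ℓ v := by
        intro hc
        exact hadj.ne (dist_inj hG (le_of_eq hleaf) hdeg _ u v hc rfl)
      simp only [hF]
      omega

lemma ndeg_le_two_of_iso (e : G ≃g SimpleGraph.pathGraph (Fintype.card V)) (x : V) :
    ndeg G Finset.univ x ≤ 2 := by
  classical
  unfold ndeg
  have hinj : Function.Injective (fun y : V => (e y).val) := by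
    intro a b hab
    exact e.injective (Fin.ext hab)
  rw [← Finset.card_image_of_injective _ hinj]
  refine le_trans (Finset.card_le_card (t := {(e x).val + 1, (e x).val - 1}) ?_) ?_
  · intro m hm
    rw [Finset.mem_image] at hm
    obtain ⟨y, hy, rfl⟩ := hm
    have hadj : (SimpleGraph.pathGraph (Fintype.card V)).Adj (e x) (e y) :=
      e.map_adj_iff.mpr (Finset.mem_filter.mp hy).2
    rw [SimpleGraph.pathGraph_adj] at hadj
    rcases hadj with h | h
    · exact Finset.mem_insert.mpr (Or.inl h.symm)
    · refine Finset.mem_insert.mpr (Or.inr ?_)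
      rw [Finset.mem_singleton]
      omega
  · exact le_trans (Finset.card_insert_le _ _) (by simp)

end Iso

end Jamison

open Jamison in
theorem jamison_mean_subtree_order {V : Type*} [Fintype V] (G : SimpleGraph V)
    (hG : G.IsTree) :
    ((Fintype.card V : ℝ) + 2) / 3 ≤ G.meanSubtreeOrder ∧
      (G.meanSubtreeOrder = ((Fintype.card V : ℝ) + 2) / 3 ↔
        Nonempty (G ≃g SimpleGraph.pathGraph (Fintype.card V))) := by
  classical
  haveI : Finite (G.Subgraph) := subgraph_finite
  set n := Fintype.card V with hn
  have hconn : conn G (Finset.univ : Finset V) := conn_univ hG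
  have hcardu : (Finset.univ : Finset V).card = n := Finset.card_univ
  have hN1 : 1 ≤ NN G (Finset.univ : Finset V) := one_le_NN hconn
  have hmain : (n + 2) * NN G (Finset.univ : Finset V) ≤
      3 * SS G (Finset.univ : Finset V) := by
    have := (GLB hG.IsAcyclic (Finset.univ : Finset V).card Finset.univ le_rfl hconn).1
    rwa [hcardu] at this
  have hstrict : (∃ x : V, 3 ≤ ndeg G Finset.univ x) →
      (n + 2) * NN G (Finset.univ : Finset V) + 1 ≤
        3 * SS G (Finset.univ : Finset V) := by
    rintro ⟨x, hx⟩
    have := (GLB hG.IsAcyclic (Finset.univ : Finset V).card Finset.univ le_rfl hconn).2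
      ⟨x, Finset.mem_univ x, hx⟩
    rwa [hcardu] at this
  -- rewrite the mean subtree order
  have hfin : {H : G.Subgraph | H.IsSubtree}.Finite := Set.toFinite _
  have hsetrw : {H : G.Subgraph | H.IsSubtree} = ↑hfin.toFinset :=
    (Set.Finite.coe_toFinset hfin).symm
  have hsum : ∑ H ∈ hfin.toFinset, H.verts.ncard = SS G (Finset.univ : Finset V) := by
    have h := sum_transfer (G := G) hG id
    simp only [id_eq] at h
    unfold SS
    exact h
  have hcount : hfin.toFinset.card = NN G (Finset.univ : Finset V) := by
    have h := sum_transfer (G := G) hG (fun _ => 1)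
    rw [← Finset.card_eq_sum_ones, ← Finset.card_eq_sum_ones] at h
    unfold NN
    exact h
  have hμ : G.meanSubtreeOrder =
      (SS G (Finset.univ : Finset V) : ℝ) / (NN G (Finset.univ : Finset V) : ℝ) := by
    rw [SimpleGraph.meanSubtreeOrder]
    congr 1
    · rw [hsetrw, finsum_mem_coe_finset, ← hsum, Nat.cast_sum]
    · have h : {H : G.Subgraph | H.IsSubtree}.ncard = NN G (Finset.univ : Finset V) := by
        rw [hsetrw, Set.ncard_coe_finset]
        exact hcount
      exact_mod_cast h
  have hNpos : (0 : ℝ) < (NN G (Finset.univ : Finset V) : ℝ) := by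
    exact_mod_cast hN1
  -- the basic inequality
  have hineq : ((n : ℝ) + 2) / 3 ≤ G.meanSubtreeOrder := by
    rw [hμ, div_le_div_iff₀ (by norm_num) hNpos]
    have : ((n + 2) * NN G (Finset.univ : Finset V) : ℝ) ≤
        (3 * SS G (Finset.univ : Finset V) : ℝ) := by exact_mod_cast hmain
    push_cast at this ⊢
    linarith
  refine ⟨hineq, ?_⟩
  have hiff1 : G.meanSubtreeOrder = ((n : ℝ) + 2) / 3 ↔
      3 * SS G (Finset.univ : Finset V) = (n + 2) * NN G (Finset.univ : Finset V) := by
    rw [hμ, div_eq_div_iff (ne_of_gt hNpos) (by norm_num : (3 : ℝ) ≠ 0)]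
    constructor
    · intro h
      have : (3 * SS G (Finset.univ : Finset V) : ℝ) =
          ((n + 2) * NN G (Finset.univ : Finset V) : ℝ) := by
        push_cast
        linarith
      exact_mod_cast this
    · intro h
      have : (3 * SS G (Finset.univ : Finset V) : ℝ) =
          ((n + 2) * NN G (Finset.univ : Finset V) : ℝ) := by exact_mod_cast h
      push_cast at this ⊢
      linarith
  rw [hiff1]
  constructor
  · intro heq
    have hnodeg : ∀ x : V, ndeg G Finset.univ x ≤ 2 := by
      intro x
      by_contra hc
      push_neg at hc
      have := hstrict ⟨x, hc⟩
      omega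
    exact exists_iso hG hnodeg
  · rintro ⟨e⟩
    have hdeg : ∀ x : V, ndeg G Finset.univ x ≤ 2 := fun x => ndeg_le_two_of_iso e x
    obtain ⟨hNN, hSS⟩ := PathNN hG.IsAcyclic (Finset.univ : Finset V).card Finset.univ
      le_rfl hconn (fun x _ => hdeg x)
    rw [hcardu] at hNN hSS
    -- 6 SS = n (n+1) (n+2) = (2 NN) (n+2)
    obtain ⟨q, hq⟩ : ∃ q, (n + 2) * NN G (Finset.univ : Finset V) = q := ⟨_, rfl⟩
    have h6 : 6 * SS G (Finset.univ : Finset V) = 2 * q := by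
      rw [hSS, ← hq]
      calc n * (n + 1) * (n + 2) = (n * (n + 1)) * (n + 2) := by ring
        _ = 2 * NN G (Finset.univ : Finset V) * (n + 2) := by rw [hNN]
        _ = 2 * ((n + 2) * NN G (Finset.univ : Finset V)) := by ring
    omega
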